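/- Randomized rounding bound: let H be a hypergraph on n vertices containing all singletons with weights w, w({v}) ≤ 1, let x be a fractional edge-cover, and t > 0. Select each edge A independently with probability p_A = min(1, t·x_A), and add as singletons all uncovered vertices. Then the expected total weight of the resulting cover is at most t·Σ_A w(A)x_A + n·e^{−t}; in particular the probability that a fixed vertex v is uncovered by the random selection is at most e^{−t}. -/

import Mathlib

open Finset MeasureTheory

lemma bern_true (q : NNReal) (h : q ≤ 1) :
    (PMF.bernoulli q h).toMeasure {true} = (q : ENNReal) := by
  rw [PMF.toMeasure_apply_singleton _ _ (measurableSet_singleton _), PMF.bernoulli_apply]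
  simp

lemma bern_false (q : NNReal) (h : q ≤ 1) :
    (PMF.bernoulli q h).toMeasure {false} = 1 - (q : ENNReal) := by
  rw [PMF.toMeasure_apply_singleton _ _ (measurableSet_singleton _), PMF.bernoulli_apply]
  simp [ENNReal.coe_sub]

lemma one_sub_min_le_exp {a : ℝ} (ha : 0 ≤ a) : 1 - min 1 a ≤ Real.exp (-a) := by
  rcases le_or_gt a 1 with h | h
  · rw [min_eq_right h]
    linarith [Real.add_one_le_exp (-a)]
  · rw [min_eq_left h.le]
    simpa using (Real.exp_pos (-a)).le

/-- randomized rounding. Select each edge `A` independently with probability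
`p_A = min(1, t·x_A)` (product Bernoulli measure `μ`), and add as singletons all uncovered
vertices. Then each fixed vertex is uncovered with probability at most `e^{-t}`, and the
expected total weight of the resulting cover is at most `t·Σ_A w(A)x_A + n·e^{-t}`. -/
theorem stmt13 {V : Type*} [Fintype V] [DecidableEq V]
    (H : Finset (Finset V)) (w : Finset V → ℝ)
    (hsing : ∀ v : V, {v} ∈ H)
    (hw0 : ∀ A ∈ H, 0 ≤ w A)
    (hw1 : ∀ v : V, w {v} ≤ 1)
    (x : Finset V → ℝ) (hx0 : ∀ A, 0 ≤ x A)
    (hxcov : ∀ v : V, 1 ≤ ∑ A ∈ H.filter (fun A => v ∈ A), x A)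
    (t : ℝ) (ht : 0 < t)
    (p : {A // A ∈ H} → NNReal) (hp1 : ∀ A, p A ≤ 1)
    (hp : ∀ A, (p A : ℝ) = min 1 (t * x A.1))
    (μ : Measure ({A // A ∈ H} → Bool))
    (hμ : μ = Measure.pi fun A => ((PMF.bernoulli (p A) (by exact_mod_cast hp1 A)).toMeasure)) :
    (∀ v : V,
      μ {ω | ∀ A : {A // A ∈ H}, ω A = true → v ∉ A.1} ≤ ENNReal.ofReal (Real.exp (-t))) ∧
    (∫ ω, ((∑ A ∈ H.attach.filter (fun A => ω A = true), w A.1) +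
        ∑ v ∈ Finset.univ.filter
          (fun v : V => ∀ A : {A // A ∈ H}, ω A = true → v ∉ A.1), w {v}) ∂μ) ≤
      t * (∑ A ∈ H, w A * x A) + (Fintype.card V : ℝ) * Real.exp (-t) := by
  classical
  subst hμ
  set ν : {A // A ∈ H} → Measure Bool :=
    fun A => ((PMF.bernoulli (p A) (by exact_mod_cast hp1 A)).toMeasure) with hν
  haveI hνprob : ∀ A, IsProbabilityMeasure (ν A) := fun A => PMF.toMeasure.isProbabilityMeasure _
  haveI : IsProbabilityMeasure (Measure.pi ν) := inferInstance
  -- description of the uncovered event as a product set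
  have hEv : ∀ v : V,
      {ω : {A // A ∈ H} → Bool | ∀ A : {A // A ∈ H}, ω A = true → v ∉ A.1}
        = Set.univ.pi (fun A : {A // A ∈ H} =>
            if v ∈ A.1 then ({false} : Set Bool) else Set.univ) := by
    intro v
    ext ω
    simp only [Set.mem_setOf_eq, Set.mem_pi, Set.mem_univ, forall_true_left]
    constructor
    · intro h A
      by_cases hv : v ∈ A.1
      · simp only [hv, if_true, Set.mem_singleton_iff]
        cases hb : ω A with
        | false => rfl
        | true => exact absurd hv (h A hb)
      · simp [hv]
    · intro h A hb hv
      have := h A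
      rw [if_pos hv, Set.mem_singleton_iff] at this
      rw [hb] at this
      simp at this
  -- measure of the uncovered event
  have hEvmeas : ∀ v : V,
      Measure.pi ν {ω | ∀ A : {A // A ∈ H}, ω A = true → v ∉ A.1}
        = ∏ A : {A // A ∈ H}, (if v ∈ A.1 then 1 - (p A : ENNReal) else 1) := by
    intro v
    rw [hEv v, Measure.pi_pi]
    refine Finset.prod_congr rfl fun A _ => ?_
    split_ifs with hv
    · exact bern_false _ _
    · exact measure_univ
  -- part 1
  have part1 : ∀ v : V,
      Measure.pi ν {ω | ∀ A : {A // A ∈ H}, ω A = true → v ∉ A.1}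
        ≤ ENNReal.ofReal (Real.exp (-t)) := by
    intro v
    rw [hEvmeas v]
    have hcoe : ∀ A : {A // A ∈ H},
        (if v ∈ A.1 then 1 - (p A : ENNReal) else 1)
          = ENNReal.ofReal (if v ∈ A.1 then 1 - (p A : ℝ) else 1) := by
      intro A
      split_ifs with hv
      · rw [ENNReal.ofReal_sub _ (p A).coe_nonneg, ENNReal.ofReal_one,
          ENNReal.ofReal_coe_nnreal]
      · simp
    calc ∏ A : {A // A ∈ H}, (if v ∈ A.1 then 1 - (p A : ENNReal) else 1)
        = ENNReal.ofReal (∏ A : {A // A ∈ H}, (if v ∈ A.1 then 1 - (p A : ℝ) else 1)) := by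
          rw [ENNReal.ofReal_prod_of_nonneg]
          · exact Finset.prod_congr rfl fun A _ => hcoe A
          · intro A _
            split_ifs with hv
            · have : (p A : ℝ) ≤ 1 := by exact_mod_cast hp1 A
              linarith
            · norm_num
      _ ≤ ENNReal.ofReal (Real.exp (-t)) := by
          apply ENNReal.ofReal_le_ofReal
          calc ∏ A : {A // A ∈ H}, (if v ∈ A.1 then 1 - (p A : ℝ) else 1)
              ≤ ∏ A : {A // A ∈ H},
                  Real.exp (if v ∈ A.1 then -(t * x A.1) else 0) := by
                apply Finset.prod_le_prod
                · intro A _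
                  split_ifs with hv
                  · have : (p A : ℝ) ≤ 1 := by exact_mod_cast hp1 A
                    linarith
                  · norm_num
                · intro A _
                  split_ifs with hv
                  · rw [hp A]
                    exact one_sub_min_le_exp (mul_nonneg ht.le (hx0 _))
                  · simp
            _ = Real.exp (∑ A : {A // A ∈ H}, if v ∈ A.1 then -(t * x A.1) else 0) := by
                rw [Real.exp_sum]
            _ ≤ Real.exp (-t) := by
                apply Real.exp_le_exp.mpr
                have heq : ∑ A : {A // A ∈ H}, (if v ∈ A.1 then -(t * x A.1) else 0)
                    = ∑ A ∈ H.filter (fun A => v ∈ A), -(t * x A) := by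
                  rw [Finset.univ_eq_attach,
                    Finset.sum_attach H (fun B => if v ∈ B then -(t * x B) else 0),
                    Finset.sum_filter]
                rw [heq, Finset.sum_neg_distrib, ← Finset.mul_sum]
                nlinarith [hxcov v]
  refine ⟨part1, ?_⟩
  -- measurability
  have hmeasA : ∀ A : {A // A ∈ H},
      MeasurableSet {ω : {A // A ∈ H} → Bool | ω A = true} := by
    intro A
    have h : {ω : {A // A ∈ H} → Bool | ω A = true}
        = (fun ω : {A // A ∈ H} → Bool => ω A) ⁻¹' {true} := rfl
    rw [h]
    exact (measurable_pi_apply A) (measurableSet_singleton true)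
  have hmeasE : ∀ v : V,
      MeasurableSet {ω : {A // A ∈ H} → Bool | ∀ A : {A // A ∈ H}, ω A = true → v ∉ A.1} := by
    intro v
    rw [hEv v]
    refine MeasurableSet.univ_pi fun A => ?_
    split_ifs
    · exact measurableSet_singleton _
    · exact MeasurableSet.univ
  -- measure of the selection event
  have hμA : ∀ A : {A // A ∈ H},
      Measure.pi ν {ω : {A // A ∈ H} → Bool | ω A = true} = (p A : ENNReal) := by
    intro A
    have hset : {ω : {A // A ∈ H} → Bool | ω A = true}
        = Set.univ.pi (fun B : {A // A ∈ H} =>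
            if B = A then ({true} : Set Bool) else Set.univ) := by
      ext ω
      simp only [Set.mem_setOf_eq, Set.mem_pi, Set.mem_univ, forall_true_left]
      constructor
      · intro h B
        split_ifs with hB
        · subst hB; simpa using h
        · trivial
      · intro h
        have := h A
        simpa using this
    rw [hset, Measure.pi_pi]
    calc ∏ B : {A // A ∈ H}, ν B (if B = A then ({true} : Set Bool) else Set.univ)
        = ∏ B : {A // A ∈ H}, (if B = A then (p B : ENNReal) else 1) := by
          refine Finset.prod_congr rfl fun B _ => ?_
          split_ifs with hB
          · exact bern_true _ _
          · exact measure_univ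
      _ = (p A : ENNReal) := by rw [Finset.prod_ite_eq']; simp
  -- rewrite the integrand via indicators
  have hint : ∀ ω : {A // A ∈ H} → Bool,
      ((∑ A ∈ H.attach.filter (fun A => ω A = true), w A.1) +
        ∑ v ∈ Finset.univ.filter
          (fun v : V => ∀ A : {A // A ∈ H}, ω A = true → v ∉ A.1), w {v})
      = (∑ A ∈ H.attach,
          ({ω : {A // A ∈ H} → Bool | ω A = true}).indicator (fun _ => w A.1) ω)
        + ∑ v : V,
          ({ω : {A // A ∈ H} → Bool | ∀ A : {A // A ∈ H}, ω A = true → v ∉ A.1}).indicator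
            (fun _ => w {v}) ω := by
    intro ω
    rw [Finset.sum_filter, Finset.sum_filter]
    congr 1
    · exact Finset.sum_congr rfl fun A _ => by simp [Set.indicator_apply]
    · exact Finset.sum_congr rfl fun v _ => by simp [Set.indicator_apply]
  have hintg1 : ∀ A ∈ H.attach,
      Integrable (fun ω : {A // A ∈ H} → Bool =>
        ({ω : {A // A ∈ H} → Bool | ω A = true}).indicator (fun _ => w A.1) ω)
        (Measure.pi ν) :=
    fun A _ => (integrable_const _).indicator (hmeasA A)
  have hintg2 : ∀ v ∈ (Finset.univ : Finset V),
      Integrable (fun ω : {A // A ∈ H} → Bool =>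
        ({ω : {A // A ∈ H} → Bool | ∀ A : {A // A ∈ H}, ω A = true → v ∉ A.1}).indicator
          (fun _ => w {v}) ω) (Measure.pi ν) :=
    fun v _ => (integrable_const _).indicator (hmeasE v)
  have hev : ∀ v : V,
      (Measure.pi ν {ω : {A // A ∈ H} → Bool |
          ∀ A : {A // A ∈ H}, ω A = true → v ∉ A.1}).toReal ≤ Real.exp (-t) := by
    intro v
    have h := ENNReal.toReal_mono ENNReal.ofReal_ne_top (part1 v)
    rwa [ENNReal.toReal_ofReal (Real.exp_pos _).le] at h
  calc (∫ ω, ((∑ A ∈ H.attach.filter (fun A => ω A = true), w A.1) +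
        ∑ v ∈ Finset.univ.filter
          (fun v : V => ∀ A : {A // A ∈ H}, ω A = true → v ∉ A.1), w {v}) ∂(Measure.pi ν))
      = (∑ A ∈ H.attach,
          (Measure.pi ν {ω : {A // A ∈ H} → Bool | ω A = true}).toReal • w A.1)
        + ∑ v : V,
          (Measure.pi ν {ω : {A // A ∈ H} → Bool |
            ∀ A : {A // A ∈ H}, ω A = true → v ∉ A.1}).toReal • w {v} := by
        simp_rw [hint]
        rw [integral_add (integrable_finset_sum _ hintg1) (integrable_finset_sum _ hintg2),
          integral_finset_sum _ hintg1, integral_finset_sum _ hintg2]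
        congr 1
        · exact Finset.sum_congr rfl fun A _ => integral_indicator_const _ (hmeasA A)
        · exact Finset.sum_congr rfl fun v _ => integral_indicator_const _ (hmeasE v)
    _ ≤ (∑ A ∈ H.attach, t * (w A.1 * x A.1)) + ∑ v : V, Real.exp (-t) := by
        apply add_le_add
        · refine Finset.sum_le_sum fun A _ => ?_
          rw [hμA A, smul_eq_mul, ENNReal.coe_toReal, hp A]
          have h1 : min 1 (t * x A.1) ≤ t * x A.1 := min_le_right _ _
          have h2 : 0 ≤ w A.1 := hw0 A.1 A.2
          nlinarith
        · refine Finset.sum_le_sum fun v _ => ?_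
          rw [smul_eq_mul]
          calc (Measure.pi ν _).toReal * w {v}
              ≤ Real.exp (-t) * 1 :=
                mul_le_mul (hev v) (hw1 v) (hw0 _ (hsing v)) (Real.exp_pos _).le
            _ = Real.exp (-t) := mul_one _
    _ = t * (∑ A ∈ H, w A * x A) + (Fintype.card V : ℝ) * Real.exp (-t) := by
        rw [← Finset.mul_sum, Finset.sum_attach H (fun A => w A * x A),
          Finset.sum_const, Finset.card_univ, nsmul_eq_mul]
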